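/- arXiv:1501.01022 — 4 statements merged into one kernel-verified Lean document; each statement's English description precedes it below -/
import Mathlib

section
/- There exists a function j : ZFSet → ZFSet satisfying the pair-tagging recursion, i.e., a function j such that for all y, z : ZFSet, z ∈ j(y) if and only if either z = j(x) for some x ∈ y, or z = {∅, y}. -/
/-- A function `j : ZFSet → ZFSet` satisfies the pair-tagging recursion if
`j y = { j x : x ∈ y } ∪ {{∅, y}}`, i.e. `z ∈ j y ↔ (∃ x ∈ y, z = j x) ∨ z = {∅, y}`. -/
def PairTagging (j : ZFSet → ZFSet) : Prop :=
  ∀ y z : ZFSet, z ∈ j y ↔ ((∃ x ∈ y, z = j x) ∨ z = ({∅, y} : ZFSet))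

/-- `ZFSet.image` with the classical definability instance filled in. -/
noncomputable def cimage (f : ZFSet → ZFSet) : ZFSet → ZFSet :=
  @ZFSet.image f (Classical.allZFSetDefinable _)

theorem mem_cimage {f : ZFSet → ZFSet} {x y : ZFSet} :
    y ∈ cimage f x ↔ ∃ z ∈ x, f z = y :=
  @ZFSet.mem_image f (Classical.allZFSetDefinable _) x y

open Classical in
noncomputable def jFix : ZFSet → ZFSet :=
  ZFSet.mem_wf.fix fun y IH =>
    insert ({∅, y} : ZFSet) (cimage (fun x => if h : x ∈ y then IH x h else ∅) y)

open Classical in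
theorem jFix_eq (y : ZFSet) :
    jFix y = insert ({∅, y} : ZFSet) (cimage (fun x => if h : x ∈ y then jFix x else ∅) y) := by
  rw [jFix, WellFounded.fix_eq]

/-- There exists a function satisfying the pair-tagging recursion. -/
theorem exists_pairTagging : ∃ j : ZFSet → ZFSet, PairTagging j := by
  refine ⟨jFix, fun y z => ?_⟩
  rw [jFix_eq y, ZFSet.mem_insert_iff, mem_cimage]
  constructor
  · rintro (h | ⟨x, hx, rfl⟩)
    · exact Or.inr h
    · exact Or.inl ⟨x, hx, by simp [hx]⟩
  · rintro (⟨x, hx, rfl⟩ | h)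
    · exact Or.inr ⟨x, hx, by simp [hx]⟩
    · exact Or.inl h
end

section
/- If j : ZFSet → ZFSet satisfies the pair-tagging recursion, then for every y : ZFSet the pair {∅, y} is the unique element of j(y) that contains ∅; that is, {∅, y} ∈ j(y), and whenever z ∈ j(y) and ∅ ∈ z, then z = {∅, y}. -/
lemma pairTagging_ne_empty (j : ZFSet → ZFSet) (hj : PairTagging j) (x : ZFSet) :
    (∅ : ZFSet) ∉ j x := by
  intro h
  rcases (hj x ∅).1 h with ⟨x', _, hx'⟩ | h2
  · have : ({∅, x'} : ZFSet) ∈ j x' := (hj x' _).2 (Or.inr rfl)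
    rw [← hx'] at this
    exact ZFSet.notMem_empty _ this
  · have : (∅ : ZFSet) ∈ ({∅, x} : ZFSet) := by simp
    rw [← h2] at this
    exact ZFSet.notMem_empty _ this

/-- If `j` satisfies the pair-tagging recursion then `{∅, y}` is the unique element of
`j y` containing `∅`. -/
theorem pairTagging_unique_pair (j : ZFSet → ZFSet) (hj : PairTagging j) (y : ZFSet) :
    ({∅, y} : ZFSet) ∈ j y ∧ ∀ z : ZFSet, z ∈ j y → (∅ : ZFSet) ∈ z → z = ({∅, y} : ZFSet) := by
  refine ⟨(hj y _).2 (Or.inr rfl), ?_⟩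
  intro z hz h0
  rcases (hj y z).1 hz with ⟨x, _, hx⟩ | h2
  · exact absurd (hx ▸ h0) (pairTagging_ne_empty j hj x)
  · exact h2
end

section
/- If j : ZFSet → ZFSet satisfies the pair-tagging recursion, then j is injective. -/
lemma pair_zfset_inj {a b : ZFSet} (h : ({∅, a} : ZFSet) = ({∅, b} : ZFSet)) : a = b := by
  have ha : a ∈ ({∅, b} : ZFSet) := h ▸ ZFSet.mem_pair.2 (Or.inr rfl)
  have hb : b ∈ ({∅, a} : ZFSet) := h ▸ ZFSet.mem_pair.2 (Or.inr rfl)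
  rcases ZFSet.mem_pair.1 ha with h1 | h1
  · rcases ZFSet.mem_pair.1 hb with h2 | h2
    · rw [h1, h2]
    · exact h2.symm
  · exact h1

lemma tag_mem {j : ZFSet → ZFSet} (hj : PairTagging j) (y : ZFSet) :
    ({∅, y} : ZFSet) ∈ j y := (hj y _).2 (Or.inr rfl)

lemma eq_of_j_eq_tag {j : ZFSet → ZFSet} (hj : PairTagging j) {x b : ZFSet}
    (h : j x = ({∅, b} : ZFSet)) : b = ({∅, x} : ZFSet) := by
  have := tag_mem hj x
  rw [h] at this
  rcases ZFSet.mem_pair.1 this with h1 | h1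
  · exact absurd (h1 ▸ ZFSet.mem_pair.2 (Or.inl rfl)) (ZFSet.notMem_empty _)
  · exact h1.symm

/-- Any function satisfying the pair-tagging recursion is injective. -/
theorem pairTagging_injective (j : ZFSet → ZFSet) (hj : PairTagging j) :
    Function.Injective j := by
  intro a b hab
  have hb : ({∅, b} : ZFSet) ∈ j a := hab ▸ tag_mem hj b
  have ha : ({∅, a} : ZFSet) ∈ j b := hab ▸ tag_mem hj a
  rcases (hj a _).1 hb with ⟨x, hxa, hx⟩ | h
  · rcases (hj b _).1 ha with ⟨x', hx'b, hx'⟩ | h'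
    · -- j x = {∅, b}, j x' = {∅, a}
      have hb' : b = ({∅, x} : ZFSet) := eq_of_j_eq_tag hj hx.symm
      have ha' : a = ({∅, x'} : ZFSet) := eq_of_j_eq_tag hj hx'.symm
      -- x ∈ a = {∅, x'}, x' ∈ b = {∅, x}
      rw [ha'] at hxa
      rw [hb'] at hx'b
      have hxx' : x = x' := by
        rcases ZFSet.mem_pair.1 hxa with h1 | h1
        · rcases ZFSet.mem_pair.1 hx'b with h2 | h2
          · rw [h1, h2]
          · rw [h1, h2, h1]
        · exact h1
      rw [ha', hb', hxx']
    · exact pair_zfset_inj h'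
  · exact pair_zfset_inj h.symm
end

section
/- The long rational line ℚ·ω₁ is universal for ω₁-like linear orders: every ω₁-like linear order A admits an order embedding into the lexicographic order on ω₁ × ℚ. -/
open Cardinal

/-- The long rational line `ℚ·ω₁`: the lexicographic order on `ω₁ × ℚ`, where `ω₁` is
realized as the ordinals below the first uncountable ordinal `(aleph 1).ord`. -/
abbrev LongRationalLine : Type 1 := (Set.Iio (aleph 1).ord) ×ₗ ℚ

section aux
variable {A : Type*} [LinearOrder A]

lemma my_ub (hunc : ¬ Countable A) (hseg : ∀ a : A, {x : A | x < a}.Countable)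
    (S : Set A) (hS : S.Countable) : ∃ b : A, ∀ x ∈ S, x < b := by
  by_contra h
  push_neg at h
  apply hunc
  have hsub : (Set.univ : Set A) ⊆ ⋃ x ∈ S, {y | y ≤ x} := by
    intro b _
    obtain ⟨x, hx, hbx⟩ := h b
    exact Set.mem_biUnion hx hbx
  have hc : (Set.univ : Set A).Countable := by
    refine Set.Countable.mono hsub (Set.Countable.biUnion hS fun x _ => ?_)
    have h2 : {y : A | y ≤ x} ⊆ {y | y < x} ∪ {x} := by
      intro y hy
      rcases lt_or_eq_of_le hy with h' | h'
      · exact Or.inl h'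
      · exact Or.inr h'
    exact ((hseg x).union (Set.countable_singleton x)).mono h2
  rw [Set.countable_univ_iff] at hc
  exact hc

noncomputable def seqA (h : ∀ S : Set A, S.Countable → ∃ b : A, ∀ x ∈ S, x < b) :
    Ordinal.{0} → A := fun o =>
  @dite _ ((Set.range fun p : Set.Iio o => seqA h p.1).Countable) (Classical.dec _)
    (fun hc => (h _ hc).choose) (fun _ => (h ∅ Set.countable_empty).choose)
termination_by o => o
decreasing_by all_goals exact p.2

lemma countable_Iio_of_lt_omega1 {o : Ordinal.{0}} (ho : o < (aleph 1).ord) :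
    Countable (Set.Iio o) := by
  rw [← Cardinal.mk_le_aleph0_iff, Ordinal.mk_Iio_ordinal]
  have h1 : o.card < aleph 1 := Cardinal.lt_ord.mp ho
  rw [← Cardinal.succ_aleph0, Order.lt_succ_iff] at h1
  calc Cardinal.lift.{1} o.card ≤ Cardinal.lift.{1} ℵ₀ := Cardinal.lift_le.mpr h1
    _ = ℵ₀ := by simp

lemma seqA_strictMono (h : ∀ S : Set A, S.Countable → ∃ b : A, ∀ x ∈ S, x < b)
    {p o : Ordinal.{0}} (hpo : p < o) (ho : o < (aleph 1).ord) :
    seqA h p < seqA h o := by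
  have hco : Countable (Set.Iio o) := countable_Iio_of_lt_omega1 ho
  have hc : (Set.range fun q : Set.Iio o => seqA h q.1).Countable :=
    Set.countable_range _
  conv_rhs => rw [seqA]
  rw [dif_pos hc]
  exact (h _ hc).choose_spec _ ⟨⟨p, hpo⟩, rfl⟩

end aux

/-- The long rational line is universal for ω₁-like linear orders: every ω₁-like linear
order admits an order embedding into `ℚ·ω₁`. -/
theorem longRationalLine_universal (A : Type*) [LinearOrder A]
    (hunc : ¬ Countable A) (hseg : ∀ a : A, {x : A | x < a}.Countable) :
    Nonempty (A ↪o LongRationalLine) := by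
  have h := my_ub hunc hseg
  set s := seqA h with hs
  -- every x is below some s o with o < ω₁
  have hcof : ∀ x : A, ∃ o : Ordinal.{0}, o < (aleph 1).ord ∧ x < s o := by
    intro x
    by_contra hx
    push_neg at hx
    have hinj : Set.InjOn s (Set.Iio (aleph 1).ord) := by
      intro p hp q hq hpq
      by_contra hne
      rcases lt_or_gt_of_ne hne with h' | h'
      · exact absurd hpq (ne_of_lt (seqA_strictMono h h' hq))
      · exact absurd hpq.symm (ne_of_lt (seqA_strictMono h h' hp))
    have hsub : s '' (Set.Iio (aleph 1).ord) ⊆ {y | y < x} ∪ {x} := by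
      rintro _ ⟨o, ho, rfl⟩
      rcases lt_or_eq_of_le (hx o ho) with h' | h'
      · exact Or.inl h'
      · exact Or.inr (Set.mem_singleton_iff.mpr h')
    have hcnt : (s '' (Set.Iio (aleph 1).ord)).Countable :=
      (((hseg x).union (Set.countable_singleton x))).mono hsub
    have hIio : (Set.Iio (aleph 1).ord).Countable := by
      haveI := hcnt.to_subtype
      have hfi : Function.Injective
          (fun y : Set.Iio (aleph 1).ord =>
            (⟨s y.1, Set.mem_image_of_mem s y.2⟩ : s '' (Set.Iio (aleph 1).ord))) := by
        intro a b hab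
        exact Subtype.ext (hinj a.2 b.2 (congrArg Subtype.val hab))
      have := hfi.countable
      exact Set.countable_coe_iff.mp this
    rw [Cardinal.countable_iff_lt_aleph_one, Ordinal.mk_Iio_ordinal,
      Cardinal.card_ord] at hIio
    exact absurd hIio (not_lt.mpr (Cardinal.aleph_one_le_lift.mpr le_rfl))
  -- rank function
  set R : A → Set (Ordinal.{0}) := fun x => {o | o < (aleph 1).ord ∧ x < s o} with hR
  have hRne : ∀ x, (R x).Nonempty := fun x => by
    obtain ⟨o, h1, h2⟩ := hcof x; exact ⟨o, h1, h2⟩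
  set r : A → Ordinal.{0} := fun x => sInf (R x) with hr
  have hrmem : ∀ x, r x ∈ R x := fun x => csInf_mem (hRne x)
  have hrmono : ∀ {x y : A}, x < y → r x ≤ r y := by
    intro x y hxy
    exact csInf_le_csInf (OrderBot.bddBelow _) (hRne y)
      (fun o ho => ⟨ho.1, hxy.trans ho.2⟩)
  -- fibers are countable
  have hfib : ∀ o : Ordinal.{0}, Countable {x : A // r x = o} := by
    intro o
    have hcnt : Countable {y : A | y < s o} := (hseg (s o)).to_subtype
    refine Function.Injective.countable
      (f := fun x : {x : A // r x = o} =>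
        (⟨x.1, by have h2 := (hrmem x.1).2; rw [x.2] at h2; exact h2⟩ :
          {y : A | y < s o})) ?_
    intro a b hab
    simpa [Subtype.ext_iff] using hab
  -- embed each fiber into ℚ
  have hF : ∀ o : Ordinal.{0}, Nonempty ({x : A // r x = o} ↪o ℚ) := fun o =>
    have := hfib o
    Order.embedding_from_countable_to_dense _ _
  let F : ∀ o : Ordinal.{0}, {x : A // r x = o} ↪o ℚ := fun o => (hF o).some
  have congrF : ∀ {o o' : Ordinal.{0}} (e : o = o') (z : {w : A // r w = o}),
      (F o z : ℚ) = F o' ⟨z.1, e ▸ z.2⟩ := by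
    rintro o _ rfl z; rfl
  refine ⟨OrderEmbedding.ofStrictMono
    (fun x => toLex ((⟨r x, (hrmem x).1⟩ : Set.Iio (aleph 1).ord), F (r x) ⟨x, rfl⟩)) ?_⟩
  intro x y hxy
  rcases lt_or_eq_of_le (hrmono hxy) with h' | h'
  · exact Prod.Lex.lt_iff.mpr (Or.inl (Subtype.mk_lt_mk.mpr h'))
  · refine Prod.Lex.lt_iff.mpr (Or.inr ⟨Subtype.ext h', ?_⟩)
    show (F (r x) ⟨x, rfl⟩ : ℚ) < F (r y) ⟨y, rfl⟩
    rw [congrF h' ⟨x, rfl⟩]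
    exact (F (r y)).lt_iff_lt.mpr (Subtype.mk_lt_mk.mpr hxy)
end
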